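/- Let k, a be positive integers and n a natural number. Then (k+1) times the total number of humps over all (k,a)-paths of order n equals |SP_n(k,a)| − δ_{a|n}, where δ_{a|n} = 1 if a divides n and 0 otherwise. -/

import Mathlib

/-- Steps for `(k,a)`-paths: up `U = (1,k)`, down `D = (1,-1)`, horizontal `H = (a,0)`. -/
inductive Step : Type
  | U : Step
  | D : Step
  | H : Step
  deriving DecidableEq

/-- The displacement of a single step. -/
def stepDisp (k a : ℕ) : Step → ℤ × ℤ
  | Step.U => (1, (k : ℤ))
  | Step.D => (1, -1)
  | Step.H => ((a : ℤ), 0)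

/-- The total displacement of a word of steps. -/
def pathDisp (k a : ℕ) (w : List Step) : ℤ × ℤ := (w.map (stepDisp k a)).sum

/-- A super `(k,a)`-path of order `n`: a step word with total displacement `(n,0)`. -/
def IsSuperPath (k a n : ℕ) (w : List Step) : Prop :=
  pathDisp k a w = ((n : ℤ), 0)

/-- A `(k,a)`-path of order `n`: a super path all of whose partial sums have
nonnegative `y`-coordinate. -/
def IsPath (k a n : ℕ) (w : List Step) : Prop :=
  IsSuperPath k a n w ∧ ∀ p : List Step, p <+: w → 0 ≤ (pathDisp k a p).2

/-- There is a hump (a factor `U H^j D` for some `j ≥ 0`) starting at position `i` of `w`. -/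
def IsHumpAt (w : List Step) (i : ℕ) : Prop :=
  ∃ j : ℕ, (Step.U :: (List.replicate j Step.H ++ [Step.D])) <+: w.drop i

/-- `(k+1)` times the total number of humps over all `(k,a)`-paths of order `n`
equals `|SP_n(k,a)| − δ_{a∣n}`. -/
instance : Fintype Step :=
  ⟨⟨{Step.U, Step.D, Step.H}, by decide⟩, by intro x; cases x <;> decide⟩

namespace SB

open Step List

/-- y-sum of a word -/
def ys (k : ℕ) (w : List Step) : ℤ := (w.map (fun s => (stepDisp k 0 s).2)).sum

@[simp] lemma ys_nil (k : ℕ) : ys k [] = 0 := rfl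

@[simp] lemma ys_cons (k : ℕ) (x : Step) (w : List Step) :
    ys k (x :: w) = (stepDisp k 0 x).2 + ys k w := by simp [ys]

@[simp] lemma ys_append (k : ℕ) (v w : List Step) : ys k (v ++ w) = ys k v + ys k w := by
  simp [ys]

lemma pathDisp_snd (k a : ℕ) (w : List Step) : (pathDisp k a w).2 = ys k w := by
  induction w with
  | nil => rfl
  | cons x t ih =>
    simp only [pathDisp, List.map_cons, List.sum_cons] at *
    rw [Prod.snd_add, ih]
    cases x <;> simp [stepDisp, ys]

lemma pathDisp_fst (k a : ℕ) (w : List Step) :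
    (pathDisp k a w).1 = (w.count U : ℤ) + w.count D + a * w.count H := by
  induction w with
  | nil => simp [pathDisp]
  | cons x t ih =>
    simp only [pathDisp, List.map_cons, List.sum_cons] at *
    rw [Prod.fst_add, ih]
    cases x <;> simp [stepDisp, List.count_cons] <;> ring

lemma ys_eq_counts (k : ℕ) (w : List Step) :
    ys k w = (k : ℤ) * w.count U - w.count D := by
  induction w with
  | nil => simp
  | cons x t ih =>
    rw [ys_cons, ih]
    cases x <;> simp [stepDisp, List.count_cons] <;> ring

lemma length_eq_counts (w : List Step) :
    w.length = w.count U + w.count D + w.count H := by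
  induction w with
  | nil => rfl
  | cons x t ih =>
    cases x <;> simp [List.count_cons, ih] <;> ring

lemma ys_perm (k : ℕ) {v w : List Step} (h : List.Perm v w) : ys k v = ys k w :=
  (h.map _).sum_eq

/-- all words of a given length -/
def allWords : ℕ → Finset (List Step)
  | 0 => {[]}
  | n + 1 => (Finset.univ ×ˢ allWords n).image (fun p => p.1 :: p.2)

lemma mem_allWords (n : ℕ) (w : List Step) : w ∈ allWords n ↔ w.length = n := by
  induction n generalizing w with
  | zero => cases w <;> simp [allWords]
  | succ m ih =>
    cases w with
    | nil => simp [allWords]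
    | cons x t => simp [allWords, ih]

/-- words with prescribed letter counts -/
def classFinset (u d h : ℕ) : Finset (List Step) :=
  (allWords (u + d + h)).filter (fun w => w.count U = u ∧ w.count D = d ∧ w.count H = h)

lemma mem_classFinset {u d h : ℕ} {w : List Step} :
    w ∈ classFinset u d h ↔ w.count U = u ∧ w.count D = d ∧ w.count H = h := by
  unfold classFinset
  rw [Finset.mem_filter, mem_allWords]
  constructor
  · tauto
  · intro hc
    refine ⟨?_, hc⟩
    rw [length_eq_counts, hc.1, hc.2.1, hc.2.2]

/-- number of words with prescribed letter counts -/
def cnt (u d h : ℕ) : ℕ := (classFinset u d h).card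

lemma card_filter_range_get (w : List Step) (c : Step) :
    ((Finset.range w.length).filter (fun p => w[p]? = some c)).card = w.count c := by
  induction w with
  | nil => simp
  | cons x t ih =>
    have hsplit : (Finset.range (x :: t).length).filter (fun p => (x :: t)[p]? = some c) =
        (if x = c then {0} else ∅) ∪
          (((Finset.range t.length).filter (fun p => t[p]? = some c)).image Nat.succ) := by
      ext p
      cases p with
      | zero =>
        simp only [Finset.mem_filter, Finset.mem_range, Finset.mem_union, Finset.mem_image]
        constructor
        · rintro ⟨-, hp⟩
          simp only [List.getElem?_cons_zero] at hp
          left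
          simp_all
        · rintro (h0 | ⟨q, hq, hq2⟩)
          · split at h0 <;> simp_all
          · omega
      | succ q =>
        simp only [Finset.mem_filter, Finset.mem_range, Finset.mem_union, Finset.mem_image,
          List.length_cons, List.getElem?_cons_succ]
        constructor
        · rintro ⟨h1, h2⟩
          right
          exact ⟨q, by simp_all, rfl⟩
        · rintro (h0 | ⟨q', ⟨hq1, hq2⟩, hq3⟩)
          · split at h0 <;> simp_all
          · have : q' = q := by omega
            subst this
            exact ⟨by omega, hq2⟩
    rw [hsplit, Finset.card_union_of_disjoint, Finset.card_image_of_injective _ Nat.succ_injective,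
      ih, List.count_cons]
    · split <;> simp_all [add_comm]
    · split
      · simp only [Finset.disjoint_left, Finset.mem_singleton, Finset.mem_image]
        rintro p rfl ⟨q, -, hq⟩
        exact Nat.succ_ne_zero q hq
      · simp
end SB

namespace SB
open Step List

lemma length_of_mem_classFinset {u d h : ℕ} {w : List Step} (hw : w ∈ classFinset u d h) :
    w.length = u + d + h := by
  rw [mem_classFinset] at hw
  rw [length_eq_counts, hw.1, hw.2.1, hw.2.2]

lemma rotate_mem_classFinset {u d h : ℕ} {w : List Step} (hw : w ∈ classFinset u d h) (p : ℕ) :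
    w.rotate p ∈ classFinset u d h := by
  rw [mem_classFinset] at hw ⊢
  have hperm := List.rotate_perm w p
  simp [hperm.count_eq, hw.1, hw.2.1, hw.2.2]

lemma head?_rotate {w : List Step} {p : ℕ} (hp : p < w.length) :
    (w.rotate p).head? = w[p]? := by
  rw [List.head?_eq_getElem?, List.getElem?_rotate]
  · simp [Nat.mod_eq_of_lt hp]
  · omega

lemma rotate_cancel {l : List Step} {p : ℕ} (hp : p ≤ l.length) :
    (l.rotate p).rotate (l.length - p) = l := by
  rw [List.rotate_rotate]
  have h2 : p + (l.length - p) = l.length := by omega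
  rw [h2, List.rotate_length]

lemma rotate_cancel' {l : List Step} {p : ℕ} (hp : p ≤ l.length) :
    (l.rotate (l.length - p)).rotate p = l := by
  rw [List.rotate_rotate]
  have h2 : l.length - p + p = l.length := by omega
  rw [h2, List.rotate_length]

/-- Key double counting: (number of `c`'s) * (class size) = length * (size of class minus one `c`). -/
lemma rot_count (c : Step) (u d h u' d' h' m : ℕ)
    (hcount : ∀ w ∈ classFinset u d h, w.count c = m)
    (hcons : ∀ w : List Step, c :: w ∈ classFinset u d h ↔ w ∈ classFinset u' d' h') :
    m * cnt u d h = (u + d + h) * cnt u' d' h' := by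
  classical
  have hA : ((classFinset u d h).sigma
      (fun S => (Finset.range (u + d + h)).filter (fun p => S[p]? = some c))).card
      = m * cnt u d h := by
    rw [Finset.card_sigma]
    have h1 : ∀ S ∈ classFinset u d h,
        ((Finset.range (u + d + h)).filter (fun p => S[p]? = some c)).card = m := by
      intro S hS
      rw [← length_of_mem_classFinset hS, card_filter_range_get, hcount S hS]
    rw [Finset.sum_congr rfl h1]
    simp [cnt, mul_comm]
  have hB : ((Finset.range (u + d + h)) ×ˢ (classFinset u' d' h')).card
      = (u + d + h) * cnt u' d' h' := by
    simp [cnt]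
  rw [← hA, ← hB]
  refine Finset.card_bij' (fun Sp _ => (Sp.2, (Sp.1.rotate Sp.2).tail))
    (fun pT _ => ⟨(c :: pT.2).rotate ((u + d + h) - pT.1), pT.1⟩) ?_ ?_ ?_ ?_
  · -- i maps into B
    rintro ⟨S, p⟩ hSp
    simp only [Finset.mem_sigma, Finset.mem_filter, Finset.mem_range] at hSp
    obtain ⟨hS, hp, hgp⟩ := hSp
    have hlenS : S.length = u + d + h := length_of_mem_classFinset hS
    have hhead : (S.rotate p).head? = some c := by
      rw [head?_rotate (by omega)]; exact hgp
    have hrot : c :: (S.rotate p).tail = S.rotate p := List.cons_head?_tail hhead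
    simp only [Finset.mem_product, Finset.mem_range]
    refine ⟨hp, ?_⟩
    rw [← hcons, hrot]
    exact rotate_mem_classFinset hS p
  · -- j maps into A
    rintro ⟨p, T⟩ hpT
    simp only [Finset.mem_product, Finset.mem_range] at hpT
    obtain ⟨hp, hT⟩ := hpT
    have hcT : c :: T ∈ classFinset u d h := (hcons T).2 hT
    have hlenT : (c :: T).length = u + d + h := length_of_mem_classFinset hcT
    have hrr : ((c :: T).rotate ((u + d + h) - p)).rotate p = c :: T := by
      rw [← hlenT]; exact rotate_cancel' (by omega)
    simp only [Finset.mem_sigma, Finset.mem_filter, Finset.mem_range]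
    refine ⟨rotate_mem_classFinset hcT _, hp, ?_⟩
    have hlrot : ((c :: T).rotate ((u + d + h) - p)).length = u + d + h := by
      rw [List.length_rotate]; exact hlenT
    rw [← head?_rotate (w := (c :: T).rotate ((u + d + h) - p)) (p := p) (by omega), hrr]
    rfl
  · -- left inverse
    rintro ⟨S, p⟩ hSp
    simp only [Finset.mem_sigma, Finset.mem_filter, Finset.mem_range] at hSp
    obtain ⟨hS, hp, hgp⟩ := hSp
    have hlenS : S.length = u + d + h := length_of_mem_classFinset hS
    have hhead : (S.rotate p).head? = some c := by
      rw [head?_rotate (by omega)]; exact hgp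
    have hrot : c :: (S.rotate p).tail = S.rotate p := List.cons_head?_tail hhead
    have hc : (c :: (S.rotate p).tail).rotate ((u + d + h) - p) = S := by
      rw [hrot, ← hlenS]
      exact rotate_cancel (by omega)
    simp [hc]
  · -- right inverse
    rintro ⟨p, T⟩ hpT
    simp only [Finset.mem_product, Finset.mem_range] at hpT
    obtain ⟨hp, hT⟩ := hpT
    have hcT : c :: T ∈ classFinset u d h := (hcons T).2 hT
    have hlenT : (c :: T).length = u + d + h := length_of_mem_classFinset hcT
    have hrr : ((c :: T).rotate ((u + d + h) - p)).rotate p = c :: T := by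
      rw [← hlenT]; exact rotate_cancel' (by omega)
    simp [hrr]

lemma rot_count_U (u d h : ℕ) :
    (u+1) * cnt (u+1) d h = (u+1+d+h) * cnt u d h := by
  apply rot_count U (u+1) d h u d h
  · intro w hw; exact (mem_classFinset.1 hw).1
  · intro w; simp [mem_classFinset, List.count_cons]

lemma rot_count_H (u d h : ℕ) :
    (h+1) * cnt u d (h+1) = (u+d+h+1) * cnt u d h := by
  have := rot_count H u d (h+1) u d h (h+1)
    (fun w hw => (mem_classFinset.1 hw).2.2)
    (fun w => by simp [mem_classFinset, List.count_cons])
  rw [this]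
  ring_nf

/-- Key per-class identity. -/
lemma key_class (k u h : ℕ) :
    (k+1) * ∑ i ∈ Finset.range (h+1), cnt u (k*(u+1)) i = cnt (u+1) (k*(u+1)) h := by
  apply Nat.eq_of_mul_eq_mul_left (show 0 < u + 1 by omega)
  have hmain : ∀ h, (u+1) * ((k+1) * ∑ i ∈ Finset.range (h+1), cnt u (k*(u+1)) i)
      = ((u+1) + k*(u+1) + h) * cnt u (k*(u+1)) h := by
    intro h
    induction h with
    | zero =>
      rw [Finset.sum_range_succ, Finset.sum_range_zero]
      ring
    | succ h ih =>
      rw [Finset.sum_range_succ, Nat.mul_add, Nat.mul_add, ih]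
      have hH : (h+1) * cnt u (k*(u+1)) (h+1) = (u+(k*(u+1))+h+1) * cnt u (k*(u+1)) h :=
        rot_count_H u (k*(u+1)) h
      have he : (u+1) + k*(u+1) + h = u+(k*(u+1))+h+1 := by omega
      rw [he, ← hH]
      ring
  rw [hmain h, rot_count_U u (k*(u+1)) h]

end SB

namespace SB
open Step List

/-- prefix sum -/
def pref (k : ℕ) (w : List Step) (i : ℕ) : ℤ := ys k (w.take i)

@[simp] lemma pref_zero (k : ℕ) (w : List Step) : pref k w 0 = 0 := rfl

lemma pref_length (k : ℕ) (w : List Step) {i : ℕ} (hi : w.length ≤ i) :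
    pref k w i = ys k w := by
  rw [pref, List.take_of_length_le hi]

/-- A ballot word: proper prefixes nonneg, total −1. -/
def ballot (k : ℕ) (W : List Step) : Prop :=
  (∀ i < W.length, 0 ≤ pref k W i) ∧ ys k W = -1

lemma ys_drop (k : ℕ) (w : List Step) (r : ℕ) :
    ys k (w.drop r) = ys k w - pref k w r := by
  have := List.take_append_drop r w
  have h2 : ys k w = pref k w r + ys k (w.drop r) := by
    conv_lhs => rw [← this]
    rw [ys_append]; rfl
  omega

lemma pref_drop (k : ℕ) (w : List Step) (r i : ℕ) :
    ys k ((w.drop r).take i) = pref k w (r + i) - pref k w r := by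
  have h1 : w.take (r + i) = w.take r ++ (w.drop r).take i := List.take_add
  have h2 : pref k w (r + i) = pref k w r + ys k ((w.drop r).take i) := by
    rw [pref, h1, ys_append]; rfl
  omega

lemma rot_pref_low (k : ℕ) (w : List Step) {r i : ℕ} (hr : r ≤ w.length)
    (hi : i ≤ w.length - r) :
    pref k (w.rotate r) i = pref k w (r + i) - pref k w r := by
  rw [pref, List.rotate_eq_drop_append_take hr,
    List.take_append_of_le_length (by rw [List.length_drop]; exact hi), pref_drop]

lemma rot_pref_high (k : ℕ) (w : List Step) {r i : ℕ} (hr : r ≤ w.length)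
    (hi : w.length - r ≤ i) (hi2 : i ≤ w.length) :
    pref k (w.rotate r) i = ys k w - pref k w r + pref k w (i - (w.length - r)) := by
  set s := i - (w.length - r) with hs
  have hslr : s ≤ r := by omega
  have hieq : i = (w.drop r).length + s := by rw [List.length_drop]; omega
  rw [pref, List.rotate_eq_drop_append_take hr, hieq, List.take_length_add_append]
  rw [ys_append, ys_drop]
  have : (w.take r).take s = w.take s := by rw [List.take_take, min_eq_left hslr]
  rw [this]
  rfl

lemma ys_rotate (k : ℕ) (w : List Step) (r : ℕ) : ys k (w.rotate r) = ys k w :=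
  ys_perm k (List.rotate_perm w r)

/-- characterization of rotations giving ballot words: `r` is the first minimum of prefix sums -/
lemma ballot_rotate_iff (k : ℕ) (w : List Step) {r : ℕ} (hr : r < w.length)
    (hys : ys k w = -1) :
    ballot k (w.rotate r) ↔
      ((∀ q, r ≤ q → q < w.length → pref k w r ≤ pref k w q) ∧
       (∀ s, s < r → pref k w r < pref k w s)) := by
  constructor
  · rintro ⟨hb, -⟩
    constructor
    · intro q hq1 hq2
      have h := hb (q - r) (by rw [List.length_rotate]; omega)
      rw [rot_pref_low k w (by omega) (by omega)] at h
      have : r + (q - r) = q := by omega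
      rw [this] at h
      omega
    · intro s hs
      have h := hb ((w.length - r) + s) (by rw [List.length_rotate]; omega)
      rw [rot_pref_high k w (by omega) (by omega) (by omega)] at h
      have : (w.length - r) + s - (w.length - r) = s := by omega
      rw [this, hys] at h
      omega
  · rintro ⟨hA, hB⟩
    refine ⟨?_, by rw [ys_rotate]; exact hys⟩
    intro i hi
    rw [List.length_rotate] at hi
    rcases le_or_gt i (w.length - r) with hle | hgt
    · rw [rot_pref_low k w (by omega) hle]
      rcases lt_or_eq_of_le (show r + i ≤ w.length by omega) with hlt | heq
      · have := hA (r + i) (by omega) hlt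
        omega
      · have hr0 : 0 < r := by omega
        have h0 := hB 0 hr0
        rw [pref_zero] at h0
        have : pref k w (r + i) = -1 := by rw [heq, pref_length k w (le_refl _), hys]
        omega
    · rw [rot_pref_high k w (by omega) (by omega) (by omega), hys]
      have hs : i - (w.length - r) < r := by omega
      have := hB _ hs
      omega

lemma ballot_rotate_unique (k : ℕ) (w : List Step) {r₁ r₂ : ℕ} (h₁ : r₁ < w.length)
    (h₂ : r₂ < w.length) (hys : ys k w = -1)
    (hb₁ : ballot k (w.rotate r₁)) (hb₂ : ballot k (w.rotate r₂)) : r₁ = r₂ := by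
  rw [ballot_rotate_iff k w h₁ hys] at hb₁
  rw [ballot_rotate_iff k w h₂ hys] at hb₂
  rcases lt_trichotomy r₁ r₂ with h | h | h
  · have a1 := hb₁.1 r₂ (by omega) h₂
    have a2 := hb₂.2 r₁ h
    omega
  · exact h
  · have a1 := hb₂.1 r₁ (by omega) h₁
    have a2 := hb₁.2 r₂ h
    omega

lemma ballot_rotate_exists (k : ℕ) (w : List Step) (hys : ys k w = -1) :
    ∃ r, r < w.length ∧ ballot k (w.rotate r) := by
  have hne : w ≠ [] := by
    rintro rfl
    simp at hys
  have hN : 0 < w.length := List.length_pos_iff.2 hne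
  classical
  set img := (Finset.range w.length).image (pref k w) with himg
  have hnem : img.Nonempty := ⟨pref k w 0, Finset.mem_image.2 ⟨0, Finset.mem_range.2 hN, rfl⟩⟩
  set m := img.min' hnem with hm
  obtain ⟨i₀, hi₀, hpi₀⟩ := Finset.mem_image.1 (img.min'_mem hnem)
  rw [Finset.mem_range] at hi₀
  have hex : ∃ i, i < w.length ∧ pref k w i = m := ⟨i₀, hi₀, hpi₀⟩
  set r := Nat.find hex with hrdef
  obtain ⟨hrN, hrm⟩ := Nat.find_spec hex
  refine ⟨r, hrN, ?_⟩
  rw [ballot_rotate_iff k w hrN hys]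
  constructor
  · intro q hq1 hq2
    rw [hrm]
    exact img.min'_le _ (Finset.mem_image.2 ⟨q, Finset.mem_range.2 hq2, rfl⟩)
  · intro s hs
    have hns := Nat.find_min hex hs
    push_neg at hns
    have hsN : s < w.length := by omega
    have h1 : m ≤ pref k w s :=
      img.min'_le _ (Finset.mem_image.2 ⟨s, Finset.mem_range.2 hsN, rfl⟩)
    have h2 : pref k w s ≠ m := hns hsN
    rw [hrm]
    omega

end SB

namespace SB
open Step List

/-- the hump pattern -/
def hump (j : ℕ) : List Step := U :: (List.replicate j H ++ [D])

@[simp] lemma length_hump (j : ℕ) : (hump j).length = j + 2 := by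
  simp [hump]

@[simp] lemma ys_replicate_H (k m : ℕ) : ys k (List.replicate m H) = 0 := by
  induction m with
  | zero => simp
  | succ i ih => simp [List.replicate_succ, ih, stepDisp]

lemma ys_hump (k j : ℕ) : ys k (hump j) = (k : ℤ) - 1 := by
  simp [hump, stepDisp]
  ring

lemma pathDisp_eq (k a : ℕ) (w : List Step) :
    pathDisp k a w = ((w.count U + w.count D + a * w.count H : ℤ), ys k w) := by
  rw [← pathDisp_fst k a w, ← pathDisp_snd k a w]

lemma ballot_concat {k : ℕ} {W : List Step} (hW : ballot k W) (hne : W ≠ []) :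
    W.dropLast ++ [D] = W := by
  have hlast := List.dropLast_append_getLast hne
  have hlen : 0 < W.length := List.length_pos_iff.2 hne
  have hys : ys k W = ys k W.dropLast + (stepDisp k 0 (W.getLast hne)).2 := by
    conv_lhs => rw [← hlast]
    simp
  have hpf : 0 ≤ ys k W.dropLast := by
    have := hW.1 (W.length - 1) (by omega)
    rw [pref, ← List.dropLast_eq_take] at this
    exact this
  have hm1 := hW.2
  cases hc : W.getLast hne with
  | U => rw [hc] at hys; simp [stepDisp] at hys; omega
  | H => rw [hc] at hys; simp [stepDisp] at hys; omega
  | D => rw [← hc]; exact hlast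

section Bij

variable (k a n : ℕ)

/-- hump-marked paths -/
def Aset : Set (List Step × ℕ) := {Lp | IsPath k a n Lp.1 ∧ IsHumpAt Lp.1 Lp.2}

/-- words of displacement (n+1, -1) starting with a hump -/
def Bset : Set (List Step) :=
  {S | pathDisp k a S = ((n : ℤ) + 1, -1) ∧ ∃ j T, S = hump j ++ T}

/-- the rotation map -/
def Fmap (Lp : List Step × ℕ) : List Step := (Lp.1 ++ [Step.D]).rotate Lp.2

lemma Fmap_mk (P : List Step) (m : ℕ) : Fmap (P, m) = (P ++ [Step.D]).rotate m := rfl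

variable {k a n}

lemma humpAt_lt_length {P : List Step} {m : ℕ} (h : IsHumpAt P m) : m < P.length := by
  obtain ⟨j, hj⟩ := h
  by_contra hc
  push_neg at hc
  rw [List.drop_eq_nil_of_le hc, List.prefix_nil] at hj
  simp at hj

lemma path_ballot {P : List Step} (hP : IsPath k a n P) : ballot k (P ++ [Step.D]) := by
  constructor
  · intro i hi
    rw [List.length_append, List.length_singleton] at hi
    rw [pref, List.take_append_of_le_length (by omega)]
    have := hP.2 (P.take i) (List.take_prefix i P)
    rwa [pathDisp_snd] at this
  · have h0 : ys k P = 0 := by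
      have h2 := pathDisp_snd k a P
      rw [hP.1] at h2
      exact h2.symm
    simp [h0, stepDisp]

lemma ys_F {P : List Step} {m : ℕ} (hP : IsPath k a n P) :
    ys k (Fmap (P, m)) = -1 := by
  rw [Fmap_mk, ys_perm k (List.rotate_perm _ _)]
  exact (path_ballot hP).2

lemma mem_Bset_of_F {Lp : List Step × ℕ} (hLp : Lp ∈ Aset k a n) :
    Fmap Lp ∈ Bset k a n := by
  obtain ⟨P, m⟩ := Lp
  obtain ⟨hP, hH⟩ := hLp
  have hm : m < P.length := humpAt_lt_length hH
  obtain ⟨j, hj⟩ := hH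
  obtain ⟨R, hR⟩ := hj
  constructor
  · rw [pathDisp_eq]
    have hperm : List.Perm ((P ++ [Step.D]).rotate m) (P ++ [Step.D]) := List.rotate_perm _ _
    have hys := ys_F (m := m) hP
    rw [Fmap_mk] at hys ⊢
    rw [hys, hperm.count_eq, hperm.count_eq, hperm.count_eq]
    have hPd := hP.1
    rw [IsSuperPath, pathDisp_eq] at hPd
    rw [Prod.mk.injEq] at hPd
    simp only [List.count_append, List.count_singleton]
    rw [Prod.mk.injEq]
    constructor
    · rw [← hPd.1]
      simp
      push_cast
      ring
    · rfl
  · refine ⟨j, (R ++ [Step.D]) ++ P.take m, ?_⟩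
    rw [Fmap_mk, List.rotate_eq_drop_append_take (by simp; omega)]
    rw [List.drop_append_of_le_length (by omega), List.take_append_of_le_length (by omega)]
    rw [← hR]
    simp [hump]

lemma rotate_back {P : List Step} {m : ℕ} (hm : m < P.length) :
    ((P ++ [Step.D]).rotate m).rotate ((P.length + 1 - m) % (P.length + 1))
      = P ++ [Step.D] := by
  rcases Nat.eq_zero_or_pos m with h0 | hpos
  · subst h0
    simp [Nat.mod_self]
  · rw [Nat.mod_eq_of_lt (by omega)]
    have h := rotate_cancel (l := P ++ [Step.D]) (p := m) (by simp; omega)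
    rw [List.length_append, List.length_singleton] at h
    exact h

/-- injectivity of `Fmap` on `Aset` -/
lemma F_injOn : Set.InjOn Fmap (Aset k a n) := by
  rintro ⟨P₁, m₁⟩ h₁ ⟨P₂, m₂⟩ h₂ heq
  have hm₁ : m₁ < P₁.length := humpAt_lt_length h₁.2
  have hm₂ : m₂ < P₂.length := humpAt_lt_length h₂.2
  rw [Fmap_mk, Fmap_mk] at heq
  have hlen : P₁.length = P₂.length := by
    have h := congrArg List.length heq
    simpa using h
  set L := P₁.length + 1 with hL
  set S := (P₁ ++ [Step.D]).rotate m₁ with hSdef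
  have hSlen : S.length = L := by rw [hSdef]; simp [hL]
  have hysS : ys k S = -1 := by
    rw [hSdef, ys_perm k (List.rotate_perm _ _)]
    exact (path_ballot h₁.1).2
  set r₁ := (L - m₁) % L with hr₁
  set r₂ := (L - m₂) % L with hr₂
  have hrot₁ : S.rotate r₁ = P₁ ++ [Step.D] := by
    rw [hSdef, hr₁, hL]
    exact rotate_back hm₁
  have heq' : (P₁ ++ [Step.D]).rotate m₁ = (P₂ ++ [Step.D]).rotate m₂ := by
    rw [← hSdef, heq]
  have hrot₂ : S.rotate r₂ = P₂ ++ [Step.D] := by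
    rw [hSdef, heq', hr₂, hL, hlen]
    exact rotate_back hm₂
  have hb₁ : ballot k (S.rotate r₁) := by rw [hrot₁]; exact path_ballot h₁.1
  have hb₂ : ballot k (S.rotate r₂) := by rw [hrot₂]; exact path_ballot h₂.1
  have hLpos : 0 < L := by omega
  have hrlt₁ : r₁ < S.length := by rw [hSlen]; exact Nat.mod_lt _ hLpos
  have hrlt₂ : r₂ < S.length := by rw [hSlen]; exact Nat.mod_lt _ hLpos
  have hreq : r₁ = r₂ := ballot_rotate_unique k S hrlt₁ hrlt₂ hysS hb₁ hb₂
  have hmeq : m₁ = m₂ := by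
    rw [hr₁, hr₂] at hreq
    rcases Nat.eq_zero_or_pos m₁ with h0 | hpos₁ <;>
      rcases Nat.eq_zero_or_pos m₂ with h0' | hpos₂
    · omega
    · rw [h0, Nat.sub_zero, Nat.mod_self, Nat.mod_eq_of_lt (by omega)] at hreq; omega
    · rw [h0', Nat.sub_zero, Nat.mod_self, Nat.mod_eq_of_lt (by omega)] at hreq; omega
    · rw [Nat.mod_eq_of_lt (by omega), Nat.mod_eq_of_lt (by omega)] at hreq; omega
  have hPeq : P₁ = P₂ := by
    have h3 : P₁ ++ [Step.D] = P₂ ++ [Step.D] := by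
      rw [← hrot₁, ← hrot₂, hreq]
    have h2 := congrArg List.dropLast h3
    rwa [List.dropLast_concat, List.dropLast_concat] at h2
  rw [Prod.mk.injEq]
  exact ⟨hPeq, hmeq⟩

lemma take_hump {j : ℕ} {S T : List Step} (hS : S = hump j ++ T) :
    S.take (j + 2) = hump j := by
  rw [hS, ← length_hump j, List.take_left]

lemma hump_prefix_take {j ρ : ℕ} {S T : List Step} (hS : S = hump j ++ T) (hρ : j + 2 ≤ ρ) :
    hump j <+: S.take ρ := by
  have h1 : (S.take ρ).take (j + 2) = hump j := by
    rw [List.take_take, min_eq_left hρ, take_hump hS]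
  rw [← h1]
  exact List.take_prefix _ _

lemma pref_hump_nonneg (hk : 0 < k) {j i : ℕ} {S T : List Step} (hS : S = hump j ++ T)
    (hi : i ≤ j + 2) : 0 ≤ pref k S i := by
  have htake : S.take i = (hump j).take i := by
    rw [hS, List.take_append_of_le_length (by simp; omega)]
  rw [pref, htake]
  rcases Nat.lt_or_ge i (j + 2) with hlt | hge
  · -- i ≤ j+1 : no D yet
    have hu : hump j = (U :: List.replicate j H) ++ [D] := by simp [hump]
    have h2 : (hump j).take i = (U :: List.replicate j H).take i := by
      rw [hu, List.take_append_of_le_length (by simp; omega)]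
    rw [h2]
    have hcd : ((U :: List.replicate j H).take i).count D = 0 := by
      have hsub := (List.take_sublist i (U :: List.replicate j H)).count_le D
      have : (U :: List.replicate j H).count D = 0 := by
        simp [List.count_cons, List.count_replicate]
      omega
    rw [ys_eq_counts, hcd]
    simp
    positivity
  · have : i = j + 2 := by omega
    rw [this, ← length_hump j, List.take_length, ys_hump]
    have : (1 : ℤ) ≤ (k : ℤ) := by exact_mod_cast hk
    omega

/-- surjectivity: every element of Bset comes from Aset -/
lemma F_surjOn (hk : 0 < k) {S : List Step} (hSB : S ∈ Bset k a n) :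
    ∃ Lp ∈ Aset k a n, Fmap Lp = S := by
  obtain ⟨hdisp, j, T, hS⟩ := hSB
  have hysS : ys k S = -1 := by
    have := pathDisp_snd k a S
    rw [hdisp] at this
    exact this.symm
  have hxsS : (S.count U : ℤ) + S.count D + a * S.count H = (n : ℤ) + 1 := by
    have := pathDisp_fst k a S
    rw [hdisp] at this
    exact this.symm
  obtain ⟨r, hrN, hball⟩ := ballot_rotate_exists k S hysS
  set N := S.length with hN
  have hNj : N = j + 2 + T.length := by rw [hN, hS]; simp
  set W := S.rotate r with hW
  have hWlen : W.length = N := by rw [hW, List.length_rotate]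
  have hWne : W ≠ [] := by
    intro h
    rw [h] at hWlen
    simp at hWlen
    omega
  set P := W.dropLast with hP
  have hWPD : P ++ [Step.D] = W := ballot_concat hball hWne
  have hPlen : P.length = N - 1 := by rw [hP, List.length_dropLast, hWlen]
  -- counts of W equal counts of S
  have hperm : List.Perm W S := List.rotate_perm S r
  -- ys of P
  have hysP : ys k P = 0 := by
    have h1 : ys k W = -1 := hball.2
    rw [← hWPD] at h1
    simp [stepDisp] at h1
    omega
  -- x-displacement of P
  have hxsP : (P.count U : ℤ) + P.count D + a * P.count H = (n : ℤ) := by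
    have hcU : S.count U = P.count U := by
      rw [← hperm.count_eq U, ← hWPD]; simp
    have hcD : S.count D = P.count D + 1 := by
      rw [← hperm.count_eq D, ← hWPD]; simp
    have hcH : S.count H = P.count H := by
      rw [← hperm.count_eq H, ← hWPD]; simp
    rw [hcU, hcD, hcH] at hxsS
    push_cast at hxsS ⊢
    omega
  have hPath : IsPath k a n P := by
    constructor
    · rw [IsSuperPath, pathDisp_eq, hysP, Prod.mk.injEq]
      exact ⟨hxsP, rfl⟩
    · intro p hp
      rw [List.prefix_iff_eq_take.1 hp, pathDisp_snd]
      have hlb : p.length ≤ P.length := hp.length_le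
      have hPi : P.take p.length = W.take p.length := by
        rw [← hWPD, List.take_append_of_le_length hlb]
      rw [hPi]
      exact hball.1 p.length (by omega)
  -- the marked position
  set m := (N - r) % N with hm
  have hNpos : 0 < N := by omega
  have hFm : Fmap (P, m) = S := by
    rw [Fmap_mk, hWPD, hm]
    rcases Nat.eq_zero_or_pos r with hr0 | hrpos
    · rw [hr0, Nat.sub_zero, Nat.mod_self, List.rotate_zero, hW, hr0, List.rotate_zero]
    · rw [Nat.mod_eq_of_lt (by omega), hW]
      exact rotate_cancel (le_of_lt hrN)
  -- hump at m
  have hHump : IsHumpAt P m := by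
    rcases Nat.eq_zero_or_pos r with hr0 | hrpos
    · -- r = 0 : W = S, m = 0
      have hm0 : m = 0 := by rw [hm, hr0, Nat.sub_zero, Nat.mod_self]
      have hTne : T ≠ [] := by
        intro hT
        rw [hT, List.append_nil] at hS
        rw [hS, ys_hump] at hysS
        have : (k : ℤ) = 0 := by omega
        simp at this
        omega
      refine ⟨j, ?_⟩
      rw [hm0, List.drop_zero]
      have hPS : P = S.take (N - 1) := by
        rw [hP, hW, hr0, List.rotate_zero, List.dropLast_eq_take]
      rw [hPS]
      apply hump_prefix_take hS
      have : 0 < T.length := List.length_pos_iff.2 hTne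
      omega
    · -- r > 0 : show r ≥ j + 3
      have hchar := (ballot_rotate_iff k S hrN hysS).1 hball
      have hrj : j + 3 ≤ r := by
        by_contra hc
        push_neg at hc
        have h1 := hchar.2 0 hrpos
        rw [pref_zero] at h1
        have h2 : 0 ≤ pref k S r := pref_hump_nonneg hk hS (by omega)
        omega
      have hmval : m = N - r := by rw [hm, Nat.mod_eq_of_lt (by omega)]
      refine ⟨j, ?_⟩
      have hdropW : W.drop m = S.take r := by
        rw [hW, List.rotate_eq_drop_append_take (le_of_lt hrN), hmval]
        have : N - r = (S.drop r).length := by rw [List.length_drop]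
        rw [this, List.drop_left]
      have hPdrop : P.drop m = S.take (r - 1) := by
        rw [hP, List.dropLast_eq_take, hWlen, List.drop_take]
        rw [hdropW, List.take_take]
        congr 1
        omega
      rw [hPdrop]
      exact hump_prefix_take hS (by omega)
  exact ⟨(P, m), ⟨hPath, hHump⟩, hFm⟩

lemma Aset_Bset_ncard (hk : 0 < k) : (Aset k a n).ncard = (Bset k a n).ncard := by
  have himg : Fmap '' (Aset k a n) = Bset k a n := by
    apply Set.Subset.antisymm
    · rintro S ⟨Lp, hLp, rfl⟩
      exact mem_Bset_of_F hLp
    · intro S hS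
      obtain ⟨Lp, hLp, hF⟩ := F_surjOn hk hS
      exact ⟨Lp, hLp, hF⟩
  rw [← himg, Set.ncard_image_of_injOn F_injOn]

end Bij
end SB

namespace SB
open Step List

lemma count_hump_U (j : ℕ) : (hump j).count U = 1 := by
  simp [hump, List.count_cons, List.count_replicate, List.count_append]

lemma count_hump_D (j : ℕ) : (hump j).count D = 1 := by
  simp [hump, List.count_cons, List.count_replicate, List.count_append]

lemma count_hump_H (j : ℕ) : (hump j).count H = j := by
  simp [hump, List.count_cons, List.count_replicate, List.count_append]

lemma rep_inj : ∀ (j j' : ℕ) (T T' : List Step),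
    List.replicate j H ++ D :: T = List.replicate j' H ++ D :: T' → j = j' ∧ T = T' := by
  intro j
  induction j with
  | zero =>
    intro j' T T' h
    cases j' with
    | zero =>
      simp at h
      exact ⟨rfl, h⟩
    | succ i =>
      rw [List.replicate_succ] at h
      simp at h
  | succ i ih =>
    intro j' T T' h
    cases j' with
    | zero =>
      rw [List.replicate_succ] at h
      simp at h
    | succ i' =>
      rw [List.replicate_succ, List.replicate_succ, List.cons_append, List.cons_append] at h
      have h2 := List.tail_eq_of_cons_eq h
      have := ih i' T T' h2
      exact ⟨by omega, this.2⟩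

lemma hump_norm (j : ℕ) (T : List Step) :
    hump j ++ T = U :: (List.replicate j H ++ D :: T) := by
  simp [hump]

lemma hump_append_inj {j j' : ℕ} {T T' : List Step}
    (h : hump j ++ T = hump j' ++ T') : j = j' ∧ T = T' := by
  rw [hump_norm, hump_norm] at h
  exact rep_inj j j' T T' (List.tail_eq_of_cons_eq h)

section Assembly

variable (k a n : ℕ)

/-- index set of classes -/
def Kn : Finset (ℕ × ℕ) :=
  ((Finset.range (n+1)) ×ˢ (Finset.range (n+1))).filter
    (fun q => (k+1)*(q.1+1) + a*q.2 = n)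

/-- superpaths with at least one U, as a finset -/
def SPUfin : Finset (List Step) :=
  (Kn k a n).biUnion (fun q => classFinset (q.1+1) (k*(q.1+1)) q.2)

/-- Bset as a finset -/
def Bfin : Finset (List Step) :=
  (Kn k a n).biUnion (fun q => (Finset.range (q.2+1)).biUnion
    (fun j => (classFinset q.1 (k*(q.1+1)) (q.2-j)).image (fun T => hump j ++ T)))

variable {k a n}

lemma card_SPUfin : (SPUfin k a n).card = ∑ q ∈ Kn k a n, cnt (q.1+1) (k*(q.1+1)) q.2 := by
  apply Finset.card_biUnion
  intro q hq q' hq' hne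
  simp only [Finset.disjoint_left]
  intro w hw hw'
  rw [mem_classFinset] at hw hw'
  apply hne
  have h1 : q.1 = q'.1 := by omega
  have h2 : q.2 = q'.2 := by omega
  exact Prod.ext h1 h2

lemma card_Bfin : (Bfin k a n).card
    = ∑ q ∈ Kn k a n, ∑ i ∈ Finset.range (q.2+1), cnt q.1 (k*(q.1+1)) i := by
  rw [Bfin, Finset.card_biUnion]
  · apply Finset.sum_congr rfl
    intro q hq
    rw [Finset.card_biUnion]
    · have h1 : ∀ j ∈ Finset.range (q.2+1),
          ((classFinset q.1 (k*(q.1+1)) (q.2-j)).image (fun T => hump j ++ T)).card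
            = cnt q.1 (k*(q.1+1)) (q.2+1-1-j) := by
        intro j hj
        have he : q.2 + 1 - 1 - j = q.2 - j := by omega
        rw [he, Finset.card_image_of_injective _
          (fun T T' hTT => (hump_append_inj hTT).2)]
        rfl
      rw [Finset.sum_congr rfl h1, Finset.sum_range_reflect]
    · intro j hj j' hj' hne
      simp only [Finset.disjoint_left, Finset.mem_image]
      rintro w ⟨T, hT, rfl⟩ ⟨T', hT', hTT⟩
      exact hne ((hump_append_inj hTT).1.symm)
  · intro q hq q' hq' hne
    simp only [Finset.disjoint_left, Finset.mem_biUnion, Finset.mem_image]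
    rintro w ⟨j, hj, T, hT, rfl⟩ ⟨j', hj', T', hT', hTT⟩
    obtain ⟨rfl, rfl⟩ := hump_append_inj hTT
    rw [mem_classFinset] at hT hT'
    apply hne
    rw [Finset.mem_range] at hj hj'
    have h1 : q.1 = q'.1 := by omega
    have h2 : q.2 = q'.2 := by omega
    exact Prod.ext h1 h2

lemma main_count : (k+1) * (Bfin k a n).card = (SPUfin k a n).card := by
  rw [card_Bfin, card_SPUfin, Finset.mul_sum]
  apply Finset.sum_congr rfl
  intro q hq
  exact key_class k q.1 q.2

lemma Bfin_coe (hk : 0 < k) (ha : 0 < a) : (↑(Bfin k a n) : Set (List Step)) = Bset k a n := by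
  ext w
  simp only [Finset.coe_biUnion, Set.mem_iUnion, Finset.mem_coe, Finset.mem_biUnion, Bfin,
    Finset.mem_image, Finset.mem_range, Bset, Set.mem_setOf_eq]
  constructor
  · rintro ⟨q, hq, j, hj, T, hT, rfl⟩
    rw [Kn, Finset.mem_filter] at hq
    rw [mem_classFinset] at hT
    have hn := hq.2
    have hj2 : j + (q.2 - j) = q.2 := by omega
    refine ⟨?_, j, T, rfl⟩
    rw [pathDisp_eq, ys_eq_counts]
    simp only [List.count_append, count_hump_U, count_hump_D, count_hump_H]
    rw [hT.1, hT.2.1, hT.2.2, hj2, Prod.mk.injEq]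
    constructor
    · push_cast [← hn]
      ring
    · push_cast
      ring
  · rintro ⟨hdisp, j, T, rfl⟩
    have hys : ys k (hump j ++ T) = -1 := by
      have := pathDisp_snd k a (hump j ++ T)
      rw [hdisp] at this
      exact this.symm
    have hxs : ((hump j ++ T).count U : ℤ) + (hump j ++ T).count D
        + a * (hump j ++ T).count H = (n : ℤ) + 1 := by
      have := pathDisp_fst k a (hump j ++ T)
      rw [hdisp] at this
      exact this.symm
    rw [ys_eq_counts] at hys
    simp only [List.count_append, count_hump_U, count_hump_D, count_hump_H] at hys hxs
    have hd : T.count D = k * (T.count U + 1) := by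
      have h2 : (k : ℤ) * (1 + T.count U) - (1 + T.count D) = -1 := hys
      push_cast at h2 ⊢
      nlinarith [h2]
    have hxn : (k+1) * (T.count U + 1) + a * (T.count H + j) = n := by
      have h2 : ((1 : ℤ) + T.count U) + (1 + T.count D) + a * (j + T.count H)
          = (n : ℤ) + 1 := hxs
      rw [hd] at h2
      push_cast at h2 ⊢
      nlinarith [h2]
    refine ⟨(T.count U, T.count H + j), ?_, j, by omega, T, ?_, rfl⟩
    · rw [Kn, Finset.mem_filter, Finset.mem_product, Finset.mem_range, Finset.mem_range]
      refine ⟨⟨?_, ?_⟩, hxn⟩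
      · nlinarith [hxn]
      · nlinarith [hxn, ha]
    · rw [mem_classFinset]
      exact ⟨rfl, hd.symm ▸ rfl, by omega⟩

lemma SPUfin_coe (hk : 0 < k) (ha : 0 < a) :
    (↑(SPUfin k a n) : Set (List Step)) = {w | IsSuperPath k a n w ∧ w.count U ≠ 0} := by
  ext w
  simp only [Finset.coe_biUnion, Set.mem_iUnion, Finset.mem_coe, Finset.mem_biUnion, SPUfin,
    Set.mem_setOf_eq]
  constructor
  · rintro ⟨q, hq, hw⟩
    rw [Kn, Finset.mem_filter] at hq
    rw [mem_classFinset] at hw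
    constructor
    · rw [IsSuperPath, pathDisp_eq, ys_eq_counts, hw.1, hw.2.1, hw.2.2, Prod.mk.injEq]
      have hn := hq.2
      constructor
      · push_cast [← hn]
        ring
      · push_cast
        ring
    · rw [hw.1]; omega
  · rintro ⟨hsp, hU⟩
    have hys : ys k w = 0 := by
      have := pathDisp_snd k a w
      rw [hsp] at this
      exact this.symm
    have hxs : (w.count U : ℤ) + w.count D + a * w.count H = (n : ℤ) := by
      have := pathDisp_fst k a w
      rw [hsp] at this
      exact this.symm
    rw [ys_eq_counts] at hys
    set u₀ := w.count U
    set d₀ := w.count D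
    set h₀ := w.count H
    have hd : d₀ = k * u₀ := by
      have : (k : ℤ) * u₀ - d₀ = 0 := hys
      push_cast at this ⊢
      omega
    have hxn : (k+1) * u₀ + a * h₀ = n := by
      have : (u₀ : ℤ) + d₀ + a * h₀ = (n : ℤ) := hxs
      rw [hd] at this
      push_cast at this
      push_cast
      nlinarith [this]
    have hu₀ : 0 < u₀ := by omega
    refine ⟨(u₀ - 1, h₀), ?_, ?_⟩
    · rw [Kn, Finset.mem_filter, Finset.mem_product, Finset.mem_range, Finset.mem_range]
      have he : u₀ - 1 + 1 = u₀ := by omega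
      rw [he]
      refine ⟨⟨?_, ?_⟩, hxn⟩
      · nlinarith [hxn]
      · nlinarith [hxn, ha]
    · rw [mem_classFinset]
      have he : u₀ - 1 + 1 = u₀ := by omega
      rw [he]
      exact ⟨rfl, hd, rfl⟩

lemma eq_replicate_of_no_UD {w : List Step} (hU : w.count U = 0) (hD : w.count D = 0) :
    w = List.replicate (w.count H) H := by
  induction w with
  | nil => simp
  | cons x t ih =>
    cases x with
    | U => simp [List.count_cons] at hU
    | D => simp [List.count_cons] at hD
    | H =>
      have hU' : t.count U = 0 := by
        rw [List.count_cons] at hU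
        omega
      have hD' : t.count D = 0 := by
        rw [List.count_cons] at hD
        omega
      have hc : (H :: t).count H = t.count H + 1 := by simp [List.count_cons]
      rw [hc, List.replicate_succ, ← ih hU' hD']

end Assembly
end SB

namespace SB
open Step List

variable {k a n : ℕ}

lemma super_no_U {w : List Step} (hk : 0 < k) (ha : 0 < a) (hsp : IsSuperPath k a n w)
    (hU : w.count U = 0) : a ∣ n ∧ w = List.replicate (n / a) H := by
  have hys : ys k w = 0 := by
    have := pathDisp_snd k a w
    rw [hsp] at this
    exact this.symm
  have hxs : (w.count U : ℤ) + w.count D + a * w.count H = (n : ℤ) := by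
    have := pathDisp_fst k a w
    rw [hsp] at this
    exact this.symm
  rw [ys_eq_counts, hU] at hys
  have hD : w.count D = 0 := by
    push_cast at hys
    omega
  have hxn : a * w.count H = n := by
    rw [hU, hD] at hxs
    push_cast at hxs
    exact_mod_cast by linarith [hxs]
  have hdvd : a ∣ n := Dvd.intro _ hxn
  have hH : w.count H = n / a := by
    rw [← hxn, Nat.mul_div_cancel_left _ ha]
  refine ⟨hdvd, ?_⟩
  rw [← hH]
  exact eq_replicate_of_no_UD hU hD

lemma super_replicate (hdvd : a ∣ n) : IsSuperPath k a n (List.replicate (n / a) H) := by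
  rw [IsSuperPath, pathDisp_eq, ys_eq_counts]
  have h1 : (List.replicate (n / a) H).count U = 0 := by
    simp [List.count_replicate]
  have h2 : (List.replicate (n / a) H).count D = 0 := by
    simp [List.count_replicate]
  have h3 : (List.replicate (n / a) H).count H = n / a := by
    simp [List.count_replicate]
  rw [h1, h2, h3, Prod.mk.injEq]
  constructor
  · have h4 : a * (n / a) = n := Nat.mul_div_cancel' hdvd
    have h5 : ((a : ℤ)) * ((n / a : ℕ) : ℤ) = (n : ℤ) := by exact_mod_cast h4
    simpa using h5
  · simp

end SB

open SB in
theorem stmt2' (k a n : ℕ) (hk : 0 < k) (ha : 0 < a) :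
    (k + 1) * {Lp : List Step × ℕ | IsPath k a n Lp.1 ∧ IsHumpAt Lp.1 Lp.2}.ncard =
      {w : List Step | IsSuperPath k a n w}.ncard - (if a ∣ n then 1 else 0) := by
  have hAset : {Lp : List Step × ℕ | IsPath k a n Lp.1 ∧ IsHumpAt Lp.1 Lp.2}
      = Aset k a n := rfl
  rw [hAset, Aset_Bset_ncard hk, ← Bfin_coe hk ha, Set.ncard_coe_finset, main_count]
  -- now handle the right side
  have hSPU : (↑(SPUfin k a n) : Set (List Step))
      = {w | IsSuperPath k a n w ∧ w.count Step.U ≠ 0} := SPUfin_coe hk ha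
  by_cases hdvd : a ∣ n
  · have hset : {w : List Step | IsSuperPath k a n w}
        = insert (List.replicate (n / a) Step.H) (↑(SPUfin k a n)) := by
      rw [hSPU]
      ext w
      simp only [Set.mem_setOf_eq, Set.mem_insert_iff]
      constructor
      · intro hsp
        by_cases hU : w.count Step.U = 0
        · exact Or.inl (super_no_U hk ha hsp hU).2
        · exact Or.inr ⟨hsp, hU⟩
      · rintro (rfl | ⟨hsp, -⟩)
        · exact super_replicate hdvd
        · exact hsp
    rw [hset, if_pos hdvd]
    rw [Set.ncard_insert_of_notMem ?notmem ?fin]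
    case notmem =>
      rw [hSPU]
      intro hmem
      have := hmem.2
      simp [List.count_replicate] at this
    case fin => exact (SPUfin k a n).finite_toSet
    rw [Set.ncard_coe_finset]
    omega
  · have hset : {w : List Step | IsSuperPath k a n w} = (↑(SPUfin k a n) : Set (List Step)) := by
      rw [hSPU]
      ext w
      simp only [Set.mem_setOf_eq]
      constructor
      · intro hsp
        refine ⟨hsp, fun hU => hdvd (super_no_U hk ha hsp hU).1⟩
      · exact fun h => h.1
    rw [hset, if_neg hdvd, Set.ncard_coe_finset]
    omega


theorem stmt2 (k a n : ℕ) (hk : 0 < k) (ha : 0 < a) :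
    (k + 1) * {Lp : List Step × ℕ | IsPath k a n Lp.1 ∧ IsHumpAt Lp.1 Lp.2}.ncard =
      {w : List Step | IsSuperPath k a n w}.ncard - (if a ∣ n then 1 else 0) := stmt2' k a n hk ha
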